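/- Assume no three of the control points are collinear (λi ≠ 0 for i = 0,1,2,3), all weights are nonzero, φ1 ≠ 0, φ2 ≠ 0, and D' := φ1φ3u2² − φ1φ2u1u2 + φ2²u0u1 ≠ 0. Define the point s = (φ1φ3u2²·c0 − φ1φ2u1u2·c1 + φ2²u0u1·c3)/D' (a barycentric combination of c0, c1, c3). Then S̃1(s) = 0 and S̃2(s) = 0, and consequently q(s) = 0 and ∇q(s) = (0,0); i.e., s is the double point of the curve. -/

import Mathlib

noncomputable section

/-- Determinant of the matrix [[x, y, 1], [a₁, a₂, 1], [b₁, b₂, 1]]. -/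
def det3 (x y a₁ a₂ b₁ b₂ : ℝ) : ℝ :=
  x * (a₂ - b₂) - y * (a₁ - b₁) + (a₁ * b₂ - a₂ * b₁)

/-- L_{ij}(x,y): the implicit linear form of the line through points `p` and `q`. -/
def lineL (p q : ℝ × ℝ) (x y : ℝ) : ℝ := det3 x y p.1 p.2 q.1 q.2

/-- λ_{ijk}: determinant of [[p₁,p₂,1],[q₁,q₂,1],[r₁,r₂,1]]. -/
def lam (p q r : ℝ × ℝ) : ℝ := det3 p.1 p.2 q.1 q.2 r.1 r.2

/-- Gradient of a bivariate function. -/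
def grad (f : ℝ → ℝ → ℝ) (x y : ℝ) : ℝ × ℝ :=
  (deriv (fun s => f s y) x, deriv (fun s => f x s) y)

section Aux

lemma lineL_hasDerivAt_x (p q : ℝ × ℝ) (y x : ℝ) :
    HasDerivAt (fun t => lineL p q t y) (p.2 - q.2) x := by
  simpa [lineL, det3] using
    (((hasDerivAt_id x).mul_const (p.2 - q.2)).sub_const (y * (p.1 - q.1))).add_const
      (p.1 * q.2 - p.2 * q.1)

lemma lineL_hasDerivAt_y (p q : ℝ × ℝ) (x y : ℝ) :
    HasDerivAt (fun t => lineL p q x t) (-(p.1 - q.1)) y := by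
  simpa [lineL, det3] using
    (((hasDerivAt_id y).mul_const (p.1 - q.1)).const_sub (x * (p.2 - q.2))).add_const
      (p.1 * q.2 - p.2 * q.1)

lemma aux_key_q (l0 l1 l2 l3 u0 u1 u2 u3 U L b0 b1 b2 b3 p1 p2 p3 : ℝ)
    (hU : U = u0*u1*u2*u3) (hL : L = l0*l1*l2*l3)
    (hb0 : b0 = -(l1^2*l2^2*U - u1^2*u2^2*L))
    (hb1 : b1 = l1^3*l3*U - u1^3*u3*L)
    (hb2 : b2 = l0*l2^3*U - u0*u2^3*L)
    (hb3 : b3 = l0^2*l3^2*U - u0^2*u3^2*L)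
    (hp1 : p1 = u0*u2*l1^2 - u1^2*l0*l2)
    (hp2 : p2 = u1*u3*l2^2 - u2^2*l1*l3)
    (hp3 : p3 = u1*u2*l0*l3 - u0*u3*l1*l2) :
    b0 * (-(p2^2*u0*u1*l2) * ((p1*p3*u2^2)*l3 - (p2^2*u0*u1)*l0) * ((p1*p3*u2^2)*l1 + (p1*p2*u1*u2)*l0))
    + b1 * (-(p2^2*u0*u1*l2) * (-((p1*p3*u2^2)*l2))^2)
    + b2 * (((p1*p2*u1*u2)*l3 + (p2^2*u0*u1)*l1)^2 * ((p1*p3*u2^2)*l1 + (p1*p2*u1*u2)*l0))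
    + b3 * (-((p1*p2*u1*u2)*l2))^3 = 0 := by
  subst_vars; ring

lemma aux_key_g1 (l0 l1 l2 l3 u0 u1 u2 u3 U L b0 b1 b2 b3 p1 p2 p3 : ℝ)
    (hU : U = u0*u1*u2*u3) (hL : L = l0*l1*l2*l3)
    (hb0 : b0 = -(l1^2*l2^2*U - u1^2*u2^2*L))
    (hb1 : b1 = l1^3*l3*U - u1^3*u3*L)
    (hb2 : b2 = l0*l2^3*U - u0*u2^3*L)
    (hb3 : b3 = l0^2*l3^2*U - u0^2*u3^2*L)
    (hp1 : p1 = u0*u2*l1^2 - u1^2*l0*l2)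
    (hp2 : p2 = u1*u3*l2^2 - u2^2*l1*l3)
    (hp3 : p3 = u1*u2*l0*l3 - u0*u3*l1*l2) :
    b0 * (-(p2^2*u0*u1*l2) * (-l3) * ((p1*p3*u2^2)*l1 + (p1*p2*u1*u2)*l0)
          + -(p2^2*u0*u1*l2) * ((p1*p3*u2^2)*l3 - (p2^2*u0*u1)*l0) * (-(l0+l1)))
    + b1 * (2 * (-(p2^2*u0*u1*l2)) * (-((p1*p3*u2^2)*l2)) * l2)
    + b2 * (2 * ((p1*p2*u1*u2)*l3 + (p2^2*u0*u1)*l1) * (-l3) * ((p1*p3*u2^2)*l1 + (p1*p2*u1*u2)*l0)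
          + ((p1*p2*u1*u2)*l3 + (p2^2*u0*u1)*l1)^2 * (-(l0+l1)))
    + b3 * (3 * (-((p1*p2*u1*u2)*l2))^2 * l2) = 0 := by
  subst_vars; ring

lemma aux_key_g2 (l0 l1 l2 l3 u0 u1 u2 u3 U L b0 b1 b2 b3 p1 p2 p3 : ℝ)
    (hU : U = u0*u1*u2*u3) (hL : L = l0*l1*l2*l3)
    (hb0 : b0 = -(l1^2*l2^2*U - u1^2*u2^2*L))
    (hb1 : b1 = l1^3*l3*U - u1^3*u3*L)
    (hb2 : b2 = l0*l2^3*U - u0*u2^3*L)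
    (hb3 : b3 = l0^2*l3^2*U - u0^2*u3^2*L)
    (hp1 : p1 = u0*u2*l1^2 - u1^2*l0*l2)
    (hp2 : p2 = u1*u3*l2^2 - u2^2*l1*l3)
    (hp3 : p3 = u1*u2*l0*l3 - u0*u3*l1*l2) :
    b0 * ((-l2) * ((p1*p3*u2^2)*l3 - (p2^2*u0*u1)*l0) * ((p1*p3*u2^2)*l1 + (p1*p2*u1*u2)*l0)
          + -(p2^2*u0*u1*l2) * (-(l0+l3)) * ((p1*p3*u2^2)*l1 + (p1*p2*u1*u2)*l0)
          + -(p2^2*u0*u1*l2) * ((p1*p3*u2^2)*l3 - (p2^2*u0*u1)*l0) * (-l1))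
    + b1 * ((-l2) * (-((p1*p3*u2^2)*l2))^2
          + 2 * (-(p2^2*u0*u1*l2)) * (-((p1*p3*u2^2)*l2)) * l2)
    + b2 * (2 * ((p1*p2*u1*u2)*l3 + (p2^2*u0*u1)*l1) * l1 * ((p1*p3*u2^2)*l1 + (p1*p2*u1*u2)*l0)
          + ((p1*p2*u1*u2)*l3 + (p2^2*u0*u1)*l1)^2 * (-l1)) = 0 := by
  subst_vars; ring

lemma aux_key_S1 (l0 l1 l2 l3 u0 u1 u2 u3 p1 p2 p3 : ℝ)
    (hp1 : p1 = u0*u2*l1^2 - u1^2*l0*l2)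
    (hp2 : p2 = u1*u3*l2^2 - u2^2*l1*l3)
    (hp3 : p3 = u1*u2*l0*l3 - u0*u3*l1*l2) :
    u2 * p1 * ((p1*p2*u1*u2)*l3 + (p2^2*u0*u1)*l1) - u1 * p3 * (-((p1*p2*u1*u2)*l2)) = 0 := by
  subst_vars; ring

lemma aux_key_S2 (l0 l1 l2 l3 u0 u1 u2 u3 p1 p2 p3 : ℝ)
    (hp1 : p1 = u0*u2*l1^2 - u1^2*l0*l2)
    (hp2 : p2 = u1*u3*l2^2 - u2^2*l1*l3)
    (hp3 : p3 = u1*u2*l0*l3 - u0*u3*l1*l2) :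
    u1 * p2 * (-((p1*p3*u2^2)*l2)) - u2 * p3 * (-((p1*p2*u1*u2)*l2)) = 0 := by
  subst_vars; ring

end Aux
/-- the barycentric combination of `c0, c1, c3` giving the double point. -/
theorem double_point_barycentric_c0c1c3 (c0 c1 c2 c3 : ℝ × ℝ) (w0 w1 w2 w3 : ℝ)
    (hw0 : w0 ≠ 0) (hw1 : w1 ≠ 0) (hw2 : w2 ≠ 0) (hw3 : w3 ≠ 0)
    (u0 u1 u2 u3 : ℝ)
    (hu0 : u0 = w0) (hu1 : u1 = 3 * w1) (hu2 : u2 = 3 * w2) (hu3 : u3 = w3)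
    (l0 l1 l2 l3 : ℝ)
    (hl0 : l0 = lam c3 c2 c1) (hl1 : l1 = lam c2 c3 c0)
    (hl2 : l2 = lam c1 c0 c3) (hl3 : l3 = lam c0 c1 c2)
    (hnc0 : l0 ≠ 0) (hnc1 : l1 ≠ 0) (hnc2 : l2 ≠ 0) (hnc3 : l3 ≠ 0)
    (K0 K1 K2 K3 : ℝ → ℝ → ℝ)
    (hK0 : ∀ x y, K0 x y = lineL c0 c1 x y * lineL c1 c2 x y * lineL c2 c3 x y)
    (hK1 : ∀ x y, K1 x y = lineL c0 c1 x y * (lineL c1 c3 x y) ^ 2)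
    (hK2 : ∀ x y, K2 x y = (lineL c0 c2 x y) ^ 2 * lineL c2 c3 x y)
    (hK3 : ∀ x y, K3 x y = (lineL c0 c3 x y) ^ 3)
    (U L b0 b1 b2 b3 : ℝ)
    (hU : U = u0 * u1 * u2 * u3) (hL : L = l0 * l1 * l2 * l3)
    (hb0 : b0 = -(l1 ^ 2 * l2 ^ 2 * U - u1 ^ 2 * u2 ^ 2 * L))
    (hb1 : b1 = l1 ^ 3 * l3 * U - u1 ^ 3 * u3 * L)
    (hb2 : b2 = l0 * l2 ^ 3 * U - u0 * u2 ^ 3 * L)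
    (hb3 : b3 = l0 ^ 2 * l3 ^ 2 * U - u0 ^ 2 * u3 ^ 2 * L)
    (q : ℝ → ℝ → ℝ)
    (hq : ∀ x y, q x y = b0 * K0 x y + b1 * K1 x y + b2 * K2 x y + b3 * K3 x y)
    (phi1 phi2 phi3 : ℝ)
    (hphi1 : phi1 = u0 * u2 * l1 ^ 2 - u1 ^ 2 * l0 * l2)
    (hphi2 : phi2 = u1 * u3 * l2 ^ 2 - u2 ^ 2 * l1 * l3)
    (hphi3 : phi3 = u1 * u2 * l0 * l3 - u0 * u3 * l1 * l2)
    (hphi1ne : phi1 ≠ 0) (hphi2ne : phi2 ≠ 0)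
    (S1 S2 : ℝ → ℝ → ℝ)
    (hS1 : ∀ x y, S1 x y = u2 * phi1 * lineL c0 c2 x y - u1 * phi3 * lineL c0 c3 x y)
    (hS2 : ∀ x y, S2 x y = u1 * phi2 * lineL c1 c3 x y - u2 * phi3 * lineL c0 c3 x y)
    (D' : ℝ) (hD' : D' = phi1 * phi3 * u2 ^ 2 - phi1 * phi2 * u1 * u2 + phi2 ^ 2 * u0 * u1)
    (hD'ne : D' ≠ 0)
    (s : ℝ × ℝ)
    (hs : s = D'⁻¹ • ((phi1 * phi3 * u2 ^ 2) • c0 - (phi1 * phi2 * u1 * u2) • c1 +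
      (phi2 ^ 2 * u0 * u1) • c3)) :
    S1 s.1 s.2 = 0 ∧ S2 s.1 s.2 = 0 ∧ q s.1 s.2 = 0 ∧ grad q s.1 s.2 = (0 : ℝ × ℝ) := by
  -- components of s
  have h1 : s.1 = D'⁻¹ * ((phi1 * phi3 * u2 ^ 2) * c0.1 - (phi1 * phi2 * u1 * u2) * c1.1 +
      (phi2 ^ 2 * u0 * u1) * c3.1) := by
    rw [hs]; simp [Prod.smul_fst, Prod.fst_add, Prod.fst_sub, smul_eq_mul]; try ring
  have h2 : s.2 = D'⁻¹ * ((phi1 * phi3 * u2 ^ 2) * c0.2 - (phi1 * phi2 * u1 * u2) * c1.2 +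
      (phi2 ^ 2 * u0 * u1) * c3.2) := by
    rw [hs]; simp [Prod.smul_snd, Prod.snd_add, Prod.snd_sub, smul_eq_mul]; try ring
  have hsx : D' * s.1 = (phi1 * phi3 * u2 ^ 2) * c0.1 - (phi1 * phi2 * u1 * u2) * c1.1 +
      (phi2 ^ 2 * u0 * u1) * c3.1 := by
    rw [h1, ← mul_assoc, mul_inv_cancel₀ hD'ne, one_mul]
  have hsy : D' * s.2 = (phi1 * phi3 * u2 ^ 2) * c0.2 - (phi1 * phi2 * u1 * u2) * c1.2 +
      (phi2 ^ 2 * u0 * u1) * c3.2 := by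
    rw [h2, ← mul_assoc, mul_inv_cancel₀ hD'ne, one_mul]
  -- raw lambda formulas
  have hl0' : l0 = c3.1 * (c2.2 - c1.2) - c3.2 * (c2.1 - c1.1) + (c2.1 * c1.2 - c2.2 * c1.1) := hl0
  have hl1' : l1 = c2.1 * (c3.2 - c0.2) - c2.2 * (c3.1 - c0.1) + (c3.1 * c0.2 - c3.2 * c0.1) := hl1
  have hl2' : l2 = c1.1 * (c0.2 - c3.2) - c1.2 * (c0.1 - c3.1) + (c0.1 * c3.2 - c0.2 * c3.1) := hl2
  have hl3' : l3 = c0.1 * (c1.2 - c2.2) - c0.2 * (c1.1 - c2.1) + (c1.1 * c2.2 - c1.2 * c2.1) := hl3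
  -- values of the six lines at s (times D')
  have hL01 : D' * lineL c0 c1 s.1 s.2 = -(phi2^2*u0*u1*l2) := by
    rw [hl2']; simp only [lineL, det3]
    linear_combination (c0.2 - c1.2) * hsx - (c0.1 - c1.1) * hsy + (c0.1*c1.2 - c0.2*c1.1) * hD'
  have hL12 : D' * lineL c1 c2 s.1 s.2 = (phi1*phi3*u2^2)*l3 - (phi2^2*u0*u1)*l0 := by
    rw [hl3', hl0']; simp only [lineL, det3]
    linear_combination (c1.2 - c2.2) * hsx - (c1.1 - c2.1) * hsy + (c1.1*c2.2 - c1.2*c2.1) * hD'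
  have hL23 : D' * lineL c2 c3 s.1 s.2 = (phi1*phi3*u2^2)*l1 + (phi1*phi2*u1*u2)*l0 := by
    rw [hl1', hl0']; simp only [lineL, det3]
    linear_combination (c2.2 - c3.2) * hsx - (c2.1 - c3.1) * hsy + (c2.1*c3.2 - c2.2*c3.1) * hD'
  have hL13 : D' * lineL c1 c3 s.1 s.2 = -((phi1*phi3*u2^2)*l2) := by
    rw [hl2']; simp only [lineL, det3]
    linear_combination (c1.2 - c3.2) * hsx - (c1.1 - c3.1) * hsy + (c1.1*c3.2 - c1.2*c3.1) * hD'
  have hL02 : D' * lineL c0 c2 s.1 s.2 = (phi1*phi2*u1*u2)*l3 + (phi2^2*u0*u1)*l1 := by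
    rw [hl3', hl1']; simp only [lineL, det3]
    linear_combination (c0.2 - c2.2) * hsx - (c0.1 - c2.1) * hsy + (c0.1*c2.2 - c0.2*c2.1) * hD'
  have hL03 : D' * lineL c0 c3 s.1 s.2 = -((phi1*phi2*u1*u2)*l2) := by
    rw [hl2']; simp only [lineL, det3]
    linear_combination (c0.2 - c3.2) * hsx - (c0.1 - c3.1) * hsy + (c0.1*c3.2 - c0.2*c3.1) * hD'
  -- key polynomial identities
  have keyq := aux_key_q l0 l1 l2 l3 u0 u1 u2 u3 U L b0 b1 b2 b3 phi1 phi2 phi3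
    hU hL hb0 hb1 hb2 hb3 hphi1 hphi2 hphi3
  have keyg1 := aux_key_g1 l0 l1 l2 l3 u0 u1 u2 u3 U L b0 b1 b2 b3 phi1 phi2 phi3
    hU hL hb0 hb1 hb2 hb3 hphi1 hphi2 hphi3
  have keyg2 := aux_key_g2 l0 l1 l2 l3 u0 u1 u2 u3 U L b0 b1 b2 b3 phi1 phi2 phi3
    hU hL hb0 hb1 hb2 hb3 hphi1 hphi2 hphi3
  have keyS1 := aux_key_S1 l0 l1 l2 l3 u0 u1 u2 u3 phi1 phi2 phi3 hphi1 hphi2 hphi3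
  have keyS2 := aux_key_S2 l0 l1 l2 l3 u0 u1 u2 u3 phi1 phi2 phi3 hphi1 hphi2 hphi3
  -- S1, S2 vanish at s
  have hS1z : D' * S1 s.1 s.2 = 0 := by
    rw [hS1]
    linear_combination (u2*phi1) * hL02 - (u1*phi3) * hL03 + keyS1
  have hS2z : D' * S2 s.1 s.2 = 0 := by
    rw [hS2]
    linear_combination (u1*phi2) * hL13 - (u2*phi3) * hL03 + keyS2
  have hS1o : S1 s.1 s.2 = 0 := by
    rcases mul_eq_zero.mp hS1z with h | h
    · exact absurd h hD'ne
    · exact h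
  have hS2o : S2 s.1 s.2 = 0 := by
    rcases mul_eq_zero.mp hS2z with h | h
    · exact absurd h hD'ne
    · exact h
  -- q vanishes at s
  have hqz : D'^3 * q s.1 s.2 = 0 := by
    rw [hq, hK0, hK1, hK2, hK3]
    linear_combination
      (b0 * ((D' * lineL c1 c2 s.1 s.2) * (D' * lineL c2 c3 s.1 s.2))
        + b1 * ((D' * lineL c1 c3 s.1 s.2) * (D' * lineL c1 c3 s.1 s.2))) * hL01
      + (b0 * (-(phi2^2*u0*u1*l2)) * (D' * lineL c2 c3 s.1 s.2)) * hL12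
      + (b0 * (-(phi2^2*u0*u1*l2)) * ((phi1*phi3*u2^2)*l3 - (phi2^2*u0*u1)*l0)
        + b2 * (((phi1*phi2*u1*u2)*l3 + (phi2^2*u0*u1)*l1) * ((phi1*phi2*u1*u2)*l3 + (phi2^2*u0*u1)*l1))) * hL23
      + (b1 * (-(phi2^2*u0*u1*l2)) * ((D' * lineL c1 c3 s.1 s.2) + (-((phi1*phi3*u2^2)*l2)))) * hL13
      + (b2 * ((D' * lineL c0 c2 s.1 s.2) + ((phi1*phi2*u1*u2)*l3 + (phi2^2*u0*u1)*l1)) * (D' * lineL c2 c3 s.1 s.2)) * hL02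
      + (b3 * ((D' * lineL c0 c3 s.1 s.2) * (D' * lineL c0 c3 s.1 s.2)
        + (D' * lineL c0 c3 s.1 s.2) * (-((phi1*phi2*u1*u2)*l2))
        + (-((phi1*phi2*u1*u2)*l2)) * (-((phi1*phi2*u1*u2)*l2)))) * hL03
      + keyq
  have hqo : q s.1 s.2 = 0 := by
    rcases mul_eq_zero.mp hqz with h | h
    · exact absurd h (pow_ne_zero 3 hD'ne)
    · exact h
  -- gradient
  have hfunx : (fun t => q t s.2) = (fun t =>
      b0 * (lineL c0 c1 t s.2 * lineL c1 c2 t s.2 * lineL c2 c3 t s.2)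
      + b1 * (lineL c0 c1 t s.2 * (lineL c1 c3 t s.2 * lineL c1 c3 t s.2))
      + b2 * (lineL c0 c2 t s.2 * lineL c0 c2 t s.2 * lineL c2 c3 t s.2)
      + b3 * (lineL c0 c3 t s.2 * lineL c0 c3 t s.2 * lineL c0 c3 t s.2)) :=
    funext fun t => by rw [hq, hK0, hK1, hK2, hK3]; ring
  have hfuny : (fun t => q s.1 t) = (fun t =>
      b0 * (lineL c0 c1 s.1 t * lineL c1 c2 s.1 t * lineL c2 c3 s.1 t)
      + b1 * (lineL c0 c1 s.1 t * (lineL c1 c3 s.1 t * lineL c1 c3 s.1 t))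
      + b2 * (lineL c0 c2 s.1 t * lineL c0 c2 s.1 t * lineL c2 c3 s.1 t)
      + b3 * (lineL c0 c3 s.1 t * lineL c0 c3 s.1 t * lineL c0 c3 s.1 t)) :=
    funext fun t => by rw [hq, hK0, hK1, hK2, hK3]; ring
  have TAx := (((lineL_hasDerivAt_x c0 c1 s.2 s.1).mul (lineL_hasDerivAt_x c1 c2 s.2 s.1)).mul
      (lineL_hasDerivAt_x c2 c3 s.2 s.1)).const_mul b0
  have TBx := ((lineL_hasDerivAt_x c0 c1 s.2 s.1).mul ((lineL_hasDerivAt_x c1 c3 s.2 s.1).mul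
      (lineL_hasDerivAt_x c1 c3 s.2 s.1))).const_mul b1
  have TCx := (((lineL_hasDerivAt_x c0 c2 s.2 s.1).mul (lineL_hasDerivAt_x c0 c2 s.2 s.1)).mul
      (lineL_hasDerivAt_x c2 c3 s.2 s.1)).const_mul b2
  have TDx := (((lineL_hasDerivAt_x c0 c3 s.2 s.1).mul (lineL_hasDerivAt_x c0 c3 s.2 s.1)).mul
      (lineL_hasDerivAt_x c0 c3 s.2 s.1)).const_mul b3
  have Hx := ((TAx.add TBx).add TCx).add TDx
  have TAy := (((lineL_hasDerivAt_y c0 c1 s.1 s.2).mul (lineL_hasDerivAt_y c1 c2 s.1 s.2)).mul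
      (lineL_hasDerivAt_y c2 c3 s.1 s.2)).const_mul b0
  have TBy := ((lineL_hasDerivAt_y c0 c1 s.1 s.2).mul ((lineL_hasDerivAt_y c1 c3 s.1 s.2).mul
      (lineL_hasDerivAt_y c1 c3 s.1 s.2))).const_mul b1
  have TCy := (((lineL_hasDerivAt_y c0 c2 s.1 s.2).mul (lineL_hasDerivAt_y c0 c2 s.1 s.2)).mul
      (lineL_hasDerivAt_y c2 c3 s.1 s.2)).const_mul b2
  have TDy := (((lineL_hasDerivAt_y c0 c3 s.1 s.2).mul (lineL_hasDerivAt_y c0 c3 s.1 s.2)).mul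
      (lineL_hasDerivAt_y c0 c3 s.1 s.2)).const_mul b3
  have Hy := ((TAy.add TBy).add TCy).add TDy
  simp only [Pi.add_def, Pi.mul_def] at Hx Hy
  have H1 : D'^2 * (deriv (fun t => q t s.2) s.1 * (c1.1 - c0.1)
      + deriv (fun t => q s.1 t) s.2 * (c1.2 - c0.2)) = 0 := by
    rw [hfunx, hfuny, Hx.deriv, Hy.deriv]
    linear_combination
      (b0 * (D' * lineL c0 c1 s.1 s.2) * (D' * lineL c2 c3 s.1 s.2)
        + 2*b2 * (D' * lineL c0 c2 s.1 s.2) * (D' * lineL c2 c3 s.1 s.2)) * hl3'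
      + (b0 * (D' * lineL c0 c1 s.1 s.2) * (D' * lineL c1 c2 s.1 s.2)
        + b2 * (D' * lineL c0 c2 s.1 s.2) * (D' * lineL c0 c2 s.1 s.2)) * hl0'
      + (b0 * (D' * lineL c0 c1 s.1 s.2) * (D' * lineL c1 c2 s.1 s.2)
        + b2 * (D' * lineL c0 c2 s.1 s.2) * (D' * lineL c0 c2 s.1 s.2)) * hl1'
      + (-(2*b1 * (D' * lineL c0 c1 s.1 s.2) * (D' * lineL c1 c3 s.1 s.2))
        - 3*b3 * (D' * lineL c0 c3 s.1 s.2) * (D' * lineL c0 c3 s.1 s.2)) * hl2'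
      + (b0 * (-l3) * (D' * lineL c2 c3 s.1 s.2) + b0 * (-(l0+l1)) * (D' * lineL c1 c2 s.1 s.2)
        + 2*b1*l2*(D' * lineL c1 c3 s.1 s.2)) * hL01
      + (b0 * (-(l0+l1)) * (-(phi2^2*u0*u1*l2))) * hL12
      + (b0 * (-l3) * (-(phi2^2*u0*u1*l2))
        + 2*b2*(-l3)*((phi1*phi2*u1*u2)*l3 + (phi2^2*u0*u1)*l1)) * hL23
      + (2*b1*l2*(-(phi2^2*u0*u1*l2))) * hL13
      + (2*b2*(-l3)*(D' * lineL c2 c3 s.1 s.2)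
        + b2*(-(l0+l1))*((D' * lineL c0 c2 s.1 s.2) + ((phi1*phi2*u1*u2)*l3 + (phi2^2*u0*u1)*l1))) * hL02
      + (3*b3*l2*((D' * lineL c0 c3 s.1 s.2) + (-((phi1*phi2*u1*u2)*l2)))) * hL03
      + keyg1
  have H2 : D'^2 * (deriv (fun t => q t s.2) s.1 * (c3.1 - c0.1)
      + deriv (fun t => q s.1 t) s.2 * (c3.2 - c0.2)) = 0 := by
    rw [hfunx, hfuny, Hx.deriv, Hy.deriv]
    linear_combination
      (b0 * (D' * lineL c1 c2 s.1 s.2) * (D' * lineL c2 c3 s.1 s.2)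
        + b1 * (D' * lineL c1 c3 s.1 s.2) * (D' * lineL c1 c3 s.1 s.2)
        - 2*b1 * (D' * lineL c0 c1 s.1 s.2) * (D' * lineL c1 c3 s.1 s.2)) * hl2'
      + (b0 * (D' * lineL c0 c1 s.1 s.2) * (D' * lineL c2 c3 s.1 s.2)) * hl0'
      + (b0 * (D' * lineL c0 c1 s.1 s.2) * (D' * lineL c2 c3 s.1 s.2)) * hl3'
      + (b0 * (D' * lineL c0 c1 s.1 s.2) * (D' * lineL c1 c2 s.1 s.2)
        + b2 * (D' * lineL c0 c2 s.1 s.2) * (D' * lineL c0 c2 s.1 s.2)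
        - 2*b2 * (D' * lineL c0 c2 s.1 s.2) * (D' * lineL c2 c3 s.1 s.2)) * hl1'
      + (b0 * (-(l0+l3)) * (D' * lineL c2 c3 s.1 s.2) + b0 * (-l1) * (D' * lineL c1 c2 s.1 s.2)
        + 2*b1*l2*(D' * lineL c1 c3 s.1 s.2)) * hL01
      + (b0 * (-l2) * (D' * lineL c2 c3 s.1 s.2) + b0 * (-l1) * (-(phi2^2*u0*u1*l2))) * hL12
      + (b0 * (-l2) * ((phi1*phi3*u2^2)*l3 - (phi2^2*u0*u1)*l0)
        + b0 * (-(l0+l3)) * (-(phi2^2*u0*u1*l2))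
        + 2*b2*l1*((phi1*phi2*u1*u2)*l3 + (phi2^2*u0*u1)*l1)) * hL23
      + (b1 * (-l2) * ((D' * lineL c1 c3 s.1 s.2) + (-((phi1*phi3*u2^2)*l2)))
        + 2*b1*l2*(-(phi2^2*u0*u1*l2))) * hL13
      + (2*b2*l1*(D' * lineL c2 c3 s.1 s.2)
        + b2*(-l1)*((D' * lineL c0 c2 s.1 s.2) + ((phi1*phi2*u1*u2)*l3 + (phi2^2*u0*u1)*l1))) * hL02
      + keyg2
  have e1 : deriv (fun t => q t s.2) s.1 * (c1.1 - c0.1)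
      + deriv (fun t => q s.1 t) s.2 * (c1.2 - c0.2) = 0 := by
    rcases mul_eq_zero.mp H1 with h | h
    · exact absurd h (pow_ne_zero 2 hD'ne)
    · exact h
  have e2 : deriv (fun t => q t s.2) s.1 * (c3.1 - c0.1)
      + deriv (fun t => q s.1 t) s.2 * (c3.2 - c0.2) = 0 := by
    rcases mul_eq_zero.mp H2 with h | h
    · exact absurd h (pow_ne_zero 2 hD'ne)
    · exact h
  have hdet : (c1.1-c0.1)*(c3.2-c0.2) - (c1.2-c0.2)*(c3.1-c0.1) = -l2 := by
    rw [hl2']; ring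
  have hVz : deriv (fun t => q t s.2) s.1 * (-l2) = 0 := by
    linear_combination (c3.2-c0.2) * e1 - (c1.2-c0.2) * e2 - deriv (fun t => q t s.2) s.1 * hdet
  have hWz : deriv (fun t => q s.1 t) s.2 * (-l2) = 0 := by
    linear_combination (-(c3.1-c0.1)) * e1 + (c1.1-c0.1) * e2 - deriv (fun t => q s.1 t) s.2 * hdet
  have hgx0 : deriv (fun t => q t s.2) s.1 = 0 := by
    rcases mul_eq_zero.mp hVz with h | h
    · exact h
    · exact absurd h (neg_ne_zero.mpr hnc2)
  have hgy0 : deriv (fun t => q s.1 t) s.2 = 0 := by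
    rcases mul_eq_zero.mp hWz with h | h
    · exact h
    · exact absurd h (neg_ne_zero.mpr hnc2)
  refine ⟨hS1o, hS2o, hqo, ?_⟩
  have hg : grad q s.1 s.2 = (deriv (fun t => q t s.2) s.1, deriv (fun t => q s.1 t) s.2) := rfl
  rw [hg, hgx0, hgy0]
  rfl
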